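/- Let f : ℝ → ℝ be differentiable with u·(u·f'(u) − f(u)) > 0 for all u ≠ 0. Fix u : Ω → ℝ measurable with u ≠ 0 on a set of positive measure, and define φ(ε) = (1/ε)·∫_Ω u(x)·f(ε·u(x)) dx for ε > 0 (assuming all integrals exist). Then φ is strictly increasing on (0,∞). -/
import Mathlib


open MeasureTheory Set

lemma aux_strict (f : ℝ → ℝ) (hdiff : Differentiable ℝ f)
    (hcond : ∀ v : ℝ, v ≠ 0 → 0 < v * (v * deriv f v - f v))
    (v : ℝ) (hv : v ≠ 0) :
    StrictMonoOn (fun ε : ℝ => ε⁻¹ * (v * f (ε * v))) (Ioi 0) := by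
  apply strictMonoOn_of_deriv_pos (convex_Ioi 0)
  · apply ContinuousOn.mul
    · exact fun x hx => (continuousAt_inv₀ (ne_of_gt hx)).continuousWithinAt
    · exact (continuous_const.mul (hdiff.continuous.comp
        ((continuous_id.mul continuous_const)))).continuousOn
  · intro ε hε
    rw [interior_Ioi] at hε
    have h2 : HasDerivAt (fun ε : ℝ => v * f (ε * v)) (v * (deriv f (ε * v) * v)) ε := by
      have hc : HasDerivAt (fun x : ℝ => x * v) v ε := hasDerivAt_mul_const v
      exact (((hdiff (ε * v)).hasDerivAt.comp ε hc)).const_mul v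
    have hd : HasDerivAt (fun ε : ℝ => ε⁻¹ * (v * f (ε * v)))
        (-(ε ^ 2)⁻¹ * (v * f (ε * v)) + ε⁻¹ * (v * (deriv f (ε * v) * v))) ε :=
      (hasDerivAt_inv (ne_of_gt hε)).mul h2
    rw [hd.deriv]
    set A := deriv f (ε * v) with hA
    set B := f (ε * v) with hB
    have hw : 0 < (ε * v) * ((ε * v) * A - B) := hcond (ε * v) (mul_ne_zero (ne_of_gt hε) hv)
    have h3 : 0 < ε * (ε * v * v * A - v * B) := by nlinarith [hw]
    have hε0 : (0:ℝ) < ε := hε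
    have h4 : 0 < ε * v * v * A - v * B := by
      rcases mul_pos_iff.mp h3 with ⟨_, h⟩ | ⟨h, _⟩
      · exact h
      · linarith
    have h1 : ε * ε⁻¹ = 1 := mul_inv_cancel₀ (ne_of_gt hε0)
    have heq : -(ε ^ 2)⁻¹ * (v * B) + ε⁻¹ * (v * (A * v)) =
        ε⁻¹ * ε⁻¹ * (ε * v * v * A - v * B) := by
      rw [show ((ε ^ 2)⁻¹ : ℝ) = ε⁻¹ * ε⁻¹ by rw [sq, mul_inv]]
      linear_combination (-(ε⁻¹ * v * v * A)) * h1
    rw [heq]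
    exact mul_pos (mul_pos (inv_pos.mpr hε0) (inv_pos.mpr hε0)) h4

theorem stmt_6 {Ω : Type*} [MeasurableSpace Ω] (μ : Measure Ω) [IsFiniteMeasure μ]
    (f : ℝ → ℝ) (u : Ω → ℝ)
    (hdiff : Differentiable ℝ f)
    (hcond : ∀ v : ℝ, v ≠ 0 → 0 < v * (v * deriv f v - f v))
    (hu : AEMeasurable u μ)
    (hupos : 0 < μ {x | u x ≠ 0})
    (hint : ∀ ε : ℝ, 0 < ε → Integrable (fun x => u x * f (ε * u x)) μ) :
    StrictMonoOn (fun ε : ℝ => ε⁻¹ * ∫ x, u x * f (ε * u x) ∂μ) (Ioi (0:ℝ)) := by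
  intro a ha b hb hab
  simp only [mem_Ioi] at ha hb
  have hIa := hint a ha
  have hIb := hint b hb
  set g : Ω → ℝ := fun x => b⁻¹ * (u x * f (b * u x)) - a⁻¹ * (u x * f (a * u x)) with hg_def
  have hg : Integrable g μ := (hIb.const_mul b⁻¹).sub (hIa.const_mul a⁻¹)
  have key : ∀ x, u x ≠ 0 → 0 < g x := by
    intro x hx
    have := aux_strict f hdiff hcond (u x) hx (mem_Ioi.mpr ha) (mem_Ioi.mpr hb) hab
    simp only [mul_comm (u x)] at this ⊢
    simp only [hg_def]
    have h' : a⁻¹ * (u x * f (a * u x)) < b⁻¹ * (u x * f (b * u x)) := by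
      simpa [mul_comm] using this
    linarith
  have hzero : ∀ x, u x = 0 → g x = 0 := by
    intro x hx
    simp [hg_def, hx]
  have hnn : ∀ x, 0 ≤ g x := by
    intro x
    by_cases hx : u x = 0
    · rw [hzero x hx]
    · exact le_of_lt (key x hx)
  have hsupp : Function.support g = {x | u x ≠ 0} := by
    ext x
    simp only [Function.mem_support, mem_setOf_eq]
    constructor
    · intro h hx
      exact h (hzero x hx)
    · intro hx
      exact ne_of_gt (key x hx)
  have hpos : 0 < ∫ x, g x ∂μ :=
    (integral_pos_iff_support_of_nonneg_ae (Filter.Eventually.of_forall hnn) hg).mpr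
      (hsupp ▸ hupos)
  have heq : ∫ x, g x ∂μ =
      b⁻¹ * ∫ x, u x * f (b * u x) ∂μ - a⁻¹ * ∫ x, u x * f (a * u x) ∂μ := by
    rw [hg_def]
    rw [integral_sub (hIb.const_mul b⁻¹) (hIa.const_mul a⁻¹),
      integral_const_mul, integral_const_mul]
  simp only
  linarith [hpos, heq.symm.le, heq.le]
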